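/- Let A ∈ ℝ^{d×d} and H ∈ ℝ^{m×d}, T > 0. The reachable set R = { y_0 ∈ ℝ^d : y_0 = ∫_0^T e^{Aᵀ t} Hᵀ u_t dt for some continuous u : [0,T] → ℝ^m } is a linear subspace of ℝ^d equal to span of the columns of Hᵀ, AᵀHᵀ, ..., (Aᵀ)^{d-1} Hᵀ. -/

import Mathlib

open Matrix

namespace ControlAux

open NormedSpace MeasureTheory intervalIntegral Set Polynomial

/-- Membership in a submodule of `ℝ^d` can be tested by dot products. -/
lemma dot_orth {d : ℕ} (N : Submodule ℝ (Fin d → ℝ)) (x : Fin d → ℝ)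
    (hx : ∀ y : Fin d → ℝ, (∀ v ∈ N, y ⬝ᵥ v = 0) → y ⬝ᵥ x = 0) : x ∈ N := by
  let e : EuclideanSpace ℝ (Fin d) ≃ₗ[ℝ] (Fin d → ℝ) := WithLp.linearEquiv 2 ℝ _
  have hinner : ∀ u v : EuclideanSpace ℝ (Fin d), (inner ℝ u v : ℝ) = (e u) ⬝ᵥ (e v) := by
    intro u v
    simp [PiLp.inner_apply, RCLike.inner_apply, dotProduct, WithLp.linearEquiv, e,
      starRingEnd_apply, mul_comm]
  set N' : Submodule ℝ (EuclideanSpace ℝ (Fin d)) := N.comap e.toLinearMap with hN'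
  have hx' : e.symm x ∈ N'ᗮᗮ := by
    intro y' hy'
    have hyN : ∀ v ∈ N, (e y') ⬝ᵥ v = 0 := by
      intro v hv
      have : e.symm v ∈ N' := by
        simp [hN', Submodule.mem_comap, LinearEquiv.coe_coe, e.apply_symm_apply, hv]
      have := hy' _ this
      rw [hinner] at this
      simpa [dotProduct_comm] using this
    have := hx (e y') hyN
    rw [hinner]
    simpa [e.apply_symm_apply] using this
  rw [Submodule.orthogonal_orthogonal] at hx'
  have : e (e.symm x) ∈ N := hx'
  simpa [e.apply_symm_apply] using this

/-- Scalar test of `exp` against dot products. -/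
lemma dot_exp_eq_zero {n : ℕ} (M : Matrix (Fin n) (Fin n) ℝ) (y z : Fin n → ℝ) (t : ℝ)
    (h : ∀ k : ℕ, y ⬝ᵥ (M ^ k).mulVec z = 0) :
    y ⬝ᵥ (NormedSpace.exp (t • M)).mulVec z = 0 := by
  letI : SeminormedRing (Matrix (Fin n) (Fin n) ℝ) := Matrix.linftyOpSemiNormedRing
  letI : NormedRing (Matrix (Fin n) (Fin n) ℝ) := Matrix.linftyOpNormedRing
  letI : NormedAlgebra ℝ (Matrix (Fin n) (Fin n) ℝ) := Matrix.linftyOpNormedAlgebra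
  let φ : Matrix (Fin n) (Fin n) ℝ →ₗ[ℝ] ℝ :=
    { toFun := fun X => y ⬝ᵥ X.mulVec z
      map_add' := fun X Y => by simp [Matrix.add_mulVec, dotProduct_add]
      map_smul' := fun c X => by simp [Matrix.smul_mulVec, dotProduct_smul, smul_eq_mul] }
  let φL : Matrix (Fin n) (Fin n) ℝ →L[ℝ] ℝ :=
    { toLinearMap := φ, cont := φ.continuous_of_finiteDimensional }
  have : y ⬝ᵥ (NormedSpace.exp (t • M)).mulVec z = φL (NormedSpace.exp (t • M)) := rfl
  rw [this, NormedSpace.exp_eq_tsum ℝ, φL.map_tsum (NormedSpace.expSeries_summable' (𝕂 := ℝ) (t • M))]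
  have hterm : ∀ k : ℕ, φL (((k.factorial : ℝ))⁻¹ • (t • M) ^ k) = 0 := by
    intro k
    have : ((t • M : Matrix (Fin n) (Fin n) ℝ)) ^ k = t ^ k • M ^ k := smul_pow t M k
    rw [this, _root_.map_smul, _root_.map_smul]
    have : φL (M ^ k) = 0 := h k
    rw [this, smul_zero, smul_zero]
  simp [hterm]

/-- Cayley–Hamilton for dot-product tests. -/
lemma ch_dot {d : ℕ} (hd : 0 < d) (B : Matrix (Fin d) (Fin d) ℝ) (y z : Fin d → ℝ)
    (hy : ∀ k < d, y ⬝ᵥ (B ^ k).mulVec z = 0) : ∀ n : ℕ, y ⬝ᵥ (B ^ n).mulVec z = 0 := by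
  set r : ℝ[X] := X ^ d - B.charpoly with hr
  have hdegr : r.natDegree < d := by
    rcases eq_or_ne r 0 with h0 | h0
    · simpa [h0] using hd
    · rw [Polynomial.natDegree_lt_iff_degree_lt h0]
      have hdeg : (X ^ d - B.charpoly : ℝ[X]).degree < (d : ℕ) := by
        have h1 : (X ^ d : ℝ[X]).degree = (d : ℕ) := degree_X_pow d
        have h2 : (B.charpoly).degree = (d : ℕ) := by
          simpa [Fintype.card_fin] using B.charpoly_degree_eq_dim
        have := Polynomial.degree_sub_lt (h1.trans h2.symm)
          (pow_ne_zero d Polynomial.X_ne_zero) ?_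
        · simpa [h1] using this
        · simp [Polynomial.Monic.leadingCoeff (monic_X_pow d), B.charpoly_monic.leadingCoeff]
      exact_mod_cast hdeg
  have hBd : B ^ d = ∑ j ∈ Finset.range d, r.coeff j • B ^ j := by
    have h1 : (Polynomial.aeval B) r = B ^ d := by
      simp [hr, map_sub, Polynomial.aeval_X_pow, B.aeval_self_charpoly]
    rw [← h1, Polynomial.aeval_eq_sum_range' hdegr]
  intro n
  induction n using Nat.strong_induction_on with
  | _ n ih =>
    rcases lt_or_ge n d with hn | hn
    · exact hy n hn
    · have hpow : B ^ n = ∑ j ∈ Finset.range d, r.coeff j • B ^ (n - d + j) := by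
        calc B ^ n = B ^ (n - d) * B ^ d := by rw [← pow_add]; congr 1; omega
        _ = ∑ j ∈ Finset.range d, r.coeff j • (B ^ (n - d) * B ^ j) := by
            rw [hBd, Finset.mul_sum]; simp [mul_smul_comm]
        _ = ∑ j ∈ Finset.range d, r.coeff j • B ^ (n - d + j) := by
            simp [← pow_add]
      let φ : Matrix (Fin d) (Fin d) ℝ →ₗ[ℝ] ℝ :=
        { toFun := fun X => y ⬝ᵥ X.mulVec z
          map_add' := fun X Y => by simp [Matrix.add_mulVec, dotProduct_add]
          map_smul' := fun c X => by
            simp [Matrix.smul_mulVec, dotProduct_smul, smul_eq_mul] }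
      have : y ⬝ᵥ (B ^ n).mulVec z = φ (B ^ n) := rfl
      rw [this, hpow, map_sum]
      refine Finset.sum_eq_zero fun j hj => ?_
      rw [_root_.map_smul]
      have : φ (B ^ (n - d + j)) = 0 := ih (n - d + j) (by simp at hj; omega)
      rw [this, smul_zero]

lemma contExp {n : ℕ} (M : Matrix (Fin n) (Fin n) ℝ) :
    Continuous fun t : ℝ => NormedSpace.exp (t • M) := by
  letI : SeminormedRing (Matrix (Fin n) (Fin n) ℝ) := Matrix.linftyOpSemiNormedRing
  letI : NormedRing (Matrix (Fin n) (Fin n) ℝ) := Matrix.linftyOpNormedRing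
  letI : NormedAlgebra ℝ (Matrix (Fin n) (Fin n) ℝ) := Matrix.linftyOpNormedAlgebra
  letI : NormedAlgebra ℚ (Matrix (Fin n) (Fin n) ℝ) := Matrix.linftyOpNormedAlgebra
  exact NormedSpace.exp_continuous.comp (continuous_id.smul continuous_const)

/-- derivative of `t ↦ (C * exp(t•A)) *ᵥ x`. -/
lemma hder {a n : ℕ} (A : Matrix (Fin n) (Fin n) ℝ) (C : Matrix (Fin a) (Fin n) ℝ)
    (x : Fin n → ℝ) (t : ℝ) :
    HasDerivAt (fun s : ℝ => (C * NormedSpace.exp (s • A)).mulVec x)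
      ((C * A * NormedSpace.exp (t • A)).mulVec x) t := by
  letI : SeminormedRing (Matrix (Fin n) (Fin n) ℝ) := Matrix.linftyOpSemiNormedRing
  letI : NormedRing (Matrix (Fin n) (Fin n) ℝ) := Matrix.linftyOpNormedRing
  letI : NormedAlgebra ℝ (Matrix (Fin n) (Fin n) ℝ) := Matrix.linftyOpNormedAlgebra
  let ψ : Matrix (Fin n) (Fin n) ℝ →ₗ[ℝ] (Fin a → ℝ) :=
    { toFun := fun X => (C * X).mulVec x
      map_add' := fun X Y => by simp [Matrix.mul_add, Matrix.add_mulVec]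
      map_smul' := fun c X => by simp [Matrix.mul_smul, Matrix.smul_mulVec] }
  let ψL : Matrix (Fin n) (Fin n) ℝ →L[ℝ] (Fin a → ℝ) :=
    { toLinearMap := ψ, cont := ψ.continuous_of_finiteDimensional }
  have hexp : HasDerivAt (fun s : ℝ => NormedSpace.exp (s • A))
      (A * NormedSpace.exp (t • A)) t := hasDerivAt_exp_smul_const' A t
  have := ψL.hasFDerivAt.comp_hasDerivAt t hexp
  have h2 : ψL (A * NormedSpace.exp (t • A)) = (C * A * NormedSpace.exp (t • A)).mulVec x := by
    show (C * (A * NormedSpace.exp (t • A))).mulVec x = _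
    rw [Matrix.mul_assoc]
  rw [← h2]
  exact this

lemma exp_smul_transpose {n : ℕ} (A : Matrix (Fin n) (Fin n) ℝ) (t : ℝ) :
    NormedSpace.exp (t • Aᵀ) = (NormedSpace.exp (t • A))ᵀ := by
  rw [← Matrix.transpose_smul, Matrix.exp_transpose]

lemma exp_pullback {n : ℕ} (A : Matrix (Fin n) (Fin n) ℝ) (t : ℝ) (x : Fin n → ℝ) :
    (NormedSpace.exp ((-t) • A)).mulVec ((NormedSpace.exp (t • A)).mulVec x) = x := by
  rw [Matrix.mulVec_mulVec]
  have hc : Commute ((-t) • A) (t • A) := ((Commute.refl A).smul_left _).smul_right _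
  rw [← Matrix.exp_add_of_commute _ _ hc]
  have : (-t) • A + t • A = (0 : Matrix (Fin n) (Fin n) ℝ) := by
    rw [← add_smul]; simp
  rw [this, NormedSpace.exp_zero, Matrix.one_mulVec]

lemma dot_integral_swap {a : ℕ} (y : Fin a → ℝ) (f : ℝ → Fin a → ℝ) (T : ℝ)
    (hf : Continuous f) :
    y ⬝ᵥ (∫ t in (0:ℝ)..T, f t) = ∫ t in (0:ℝ)..T, y ⬝ᵥ f t := by
  let dotL : (Fin a → ℝ) →L[ℝ] ℝ :=
    { toLinearMap :=
        { toFun := fun v => y ⬝ᵥ v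
          map_add' := fun u v => by simp [dotProduct_add]
          map_smul' := fun c v => by simp [dotProduct_smul, smul_eq_mul] }
      cont := Continuous.dotProduct continuous_const continuous_id }
  exact (dotL.intervalIntegral_comp_comm (hf.intervalIntegrable 0 T)).symm

lemma zero_of_integral_dot {a : ℕ} (f : ℝ → Fin a → ℝ) (T : ℝ) (hT : 0 < T)
    (hf : Continuous f) (h : (∫ t in (0:ℝ)..T, (f t) ⬝ᵥ (f t)) = 0) :
    ∀ t ∈ Ioo (0:ℝ) T, f t = 0 := by
  set q : ℝ → ℝ := fun t => (f t) ⬝ᵥ (f t) with hq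
  have hqc : Continuous q := (hf.dotProduct hf)
  have hq0 : ∀ t, 0 ≤ q t := fun t =>
    Finset.sum_nonneg fun i _ => mul_self_nonneg _
  have hae : q =ᵐ[volume.restrict (Ioc 0 T)] 0 := by
    rw [← intervalIntegral.integral_eq_zero_iff_of_le_of_nonneg_ae hT.le
      (Filter.Eventually.of_forall hq0) (hqc.intervalIntegrable 0 T)]
    exact h
  have heq : EqOn q 0 (Ioc 0 T) :=
    Measure.eqOn_Ioc_of_ae_eq volume hae hqc.continuousOn continuousOn_const
  intro t ht
  have : q t = 0 := heq (Ioo_subset_Ioc_self ht)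
  exact dotProduct_self_eq_zero.mp this

/-- coordinate of `mulVec` as a dot product. -/
lemma dshuf {a b : ℕ} (M : Matrix (Fin a) (Fin b) ℝ) (w : Fin b → ℝ) (i : Fin a) :
    (M.mulVec w) i = (Mᵀ.mulVec (Pi.single i 1)) ⬝ᵥ w := by
  rw [Matrix.mulVec_transpose, ← Matrix.dotProduct_mulVec, single_dotProduct, one_mul]

/-- vanishing on generators gives vanishing on all `mulVec` values. -/
lemma vm_zero {a b : ℕ} (y : Fin a → ℝ) (N : Matrix (Fin a) (Fin b) ℝ)
    (hN : ∀ i, y ⬝ᵥ N.mulVec (Pi.single i 1) = 0) (w : Fin b → ℝ) :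
    y ⬝ᵥ N.mulVec w = 0 := by
  rw [Matrix.dotProduct_mulVec]
  have : y ᵥ* N = 0 := by
    funext i
    have := hN i
    rw [Matrix.dotProduct_mulVec, dotProduct_single, mul_one] at this
    exact this
  rw [this, zero_dotProduct]

end ControlAux

open ControlAux MeasureTheory intervalIntegral Set in
/-- The reachable set
`R = {∫_0^T e^{Aᵀt} Hᵀ u_t dt : u continuous}` equals the column span of
`[Hᵀ, AᵀHᵀ, …, (Aᵀ)^{d-1}Hᵀ]` (in particular it is a linear subspace). -/
theorem reachable_set_eq_controllability_span (d m : ℕ)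
    (A : Matrix (Fin d) (Fin d) ℝ) (H : Matrix (Fin m) (Fin d) ℝ)
    (T : ℝ) (hT : 0 < T) :
    {y₀ : Fin d → ℝ | ∃ u : ℝ → Fin m → ℝ, Continuous u ∧
        y₀ = ∫ t in (0:ℝ)..T, (NormedSpace.exp (t • Aᵀ)).mulVec (Hᵀ.mulVec (u t))}
      = ↑(Submodule.span ℝ {v : Fin d → ℝ |
          ∃ k : ℕ, k < d ∧ ∃ i : Fin m, v = (Aᵀ ^ k * Hᵀ).mulVec (Pi.single i 1)}) := by
  rcases Nat.eq_zero_or_pos d with hd | hd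
  · subst hd
    have hss : ∀ x y : Fin 0 → ℝ, x = y := fun x y => funext fun i => i.elim0
    ext y
    simp only [Set.mem_setOf_eq, SetLike.mem_coe]
    constructor
    · intro _; rw [hss y 0]; exact Submodule.zero_mem _
    · intro _
      exact ⟨fun _ _ => 0, continuous_const, hss _ _⟩
  set gen : Set (Fin d → ℝ) := {v : Fin d → ℝ |
      ∃ k : ℕ, k < d ∧ ∃ i : Fin m, v = (Aᵀ ^ k * Hᵀ).mulVec (Pi.single i 1)} with hgen
  have contF : ∀ u : ℝ → Fin m → ℝ, Continuous u →
      Continuous fun t => (NormedSpace.exp (t • Aᵀ)).mulVec (Hᵀ.mulVec (u t)) :=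
    fun u hu => (contExp Aᵀ).matrix_mulVec (continuous_const.matrix_mulVec hu)
  have orth_test : ∀ y : Fin d → ℝ,
      (∀ v ∈ gen, y ⬝ᵥ v = 0) →
      ∀ (t : ℝ) (w : Fin m → ℝ),
        y ⬝ᵥ (NormedSpace.exp (t • Aᵀ)).mulVec (Hᵀ.mulVec w) = 0 := by
    intro y hy t w
    apply dot_exp_eq_zero
    apply ch_dot hd Aᵀ y (Hᵀ.mulVec w)
    intro k hk
    rw [Matrix.mulVec_mulVec]
    exact vm_zero y (Aᵀ ^ k * Hᵀ) (fun i => hy _ ⟨k, hk, i, rfl⟩) w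
  apply Set.Subset.antisymm
  · rintro y₀ ⟨u, hu, rfl⟩
    rw [SetLike.mem_coe]
    apply dot_orth
    intro y hy
    have hy' : ∀ v ∈ gen, y ⬝ᵥ v = 0 := fun v hv => hy v (Submodule.subset_span hv)
    rw [dot_integral_swap y _ T (contF u hu)]
    have h0 : (∫ t in (0:ℝ)..T, y ⬝ᵥ (NormedSpace.exp (t • Aᵀ)).mulVec (Hᵀ.mulVec (u t)))
        = ∫ t in (0:ℝ)..T, (0:ℝ) :=
      intervalIntegral.integral_congr fun t _ => orth_test y hy' t (u t)
    rw [h0]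
    simp
  · intro v hv
    rw [SetLike.mem_coe] at hv
    set g : (Fin d → ℝ) → ℝ → Fin m → ℝ :=
      fun x t => H.mulVec ((NormedSpace.exp (t • A)).mulVec x) with hgdef
    have hgc : ∀ x, Continuous (g x) := fun x =>
      continuous_const.matrix_mulVec ((contExp A).matrix_mulVec continuous_const)
    set F : (Fin d → ℝ) → ℝ → (Fin d → ℝ) :=
      fun x t => (NormedSpace.exp (t • Aᵀ)).mulVec (Hᵀ.mulVec (g x t)) with hFdef
    have hFc : ∀ x, Continuous (F x) := fun x => contF (g x) (hgc x)
    set W : (Fin d → ℝ) → (Fin d → ℝ) := fun x => ∫ t in (0:ℝ)..T, F x t with hWdef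
    have dotF : ∀ y x t, y ⬝ᵥ F x t = (g y t) ⬝ᵥ (g x t) := by
      intro y x t
      show y ⬝ᵥ (NormedSpace.exp (t • Aᵀ)).mulVec (Hᵀ.mulVec (g x t)) = _
      rw [exp_smul_transpose, Matrix.mulVec_mulVec, ← Matrix.transpose_mul,
        Matrix.dotProduct_mulVec, Matrix.vecMul_transpose, ← Matrix.mulVec_mulVec]
    have dotW : ∀ y x, y ⬝ᵥ W x = ∫ t in (0:ℝ)..T, (g y t) ⬝ᵥ (g x t) := by
      intro y x
      show y ⬝ᵥ (∫ t in (0:ℝ)..T, F x t) = _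
      rw [dot_integral_swap y (F x) T (hFc x)]
      exact intervalIntegral.integral_congr fun t _ => dotF y x t
    have hsym : ∀ y x, y ⬝ᵥ W x = x ⬝ᵥ W y := by
      intro y x
      rw [dotW, dotW]
      exact intervalIntegral.integral_congr fun t _ => dotProduct_comm _ _
    have hWR : ∀ x, W x ∈ {y₀ : Fin d → ℝ | ∃ u : ℝ → Fin m → ℝ, Continuous u ∧
        y₀ = ∫ t in (0:ℝ)..T, (NormedSpace.exp (t • Aᵀ)).mulVec (Hᵀ.mulVec (u t))} :=
      fun x => ⟨g x, hgc x, rfl⟩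
    have kernel_orth : ∀ y : Fin d → ℝ, (∀ x, y ⬝ᵥ W x = 0) →
        ∀ u ∈ Submodule.span ℝ gen, y ⬝ᵥ u = 0 := by
      intro y hy0
      have hWy : W y = 0 := by
        have h1 : (W y) ⬝ᵥ (W y) = 0 := by
          rw [← hsym y (W y)]
          exact hy0 (W y)
        exact dotProduct_self_eq_zero.mp h1
      have hgy : ∀ t ∈ Ioo (0:ℝ) T, g y t = 0 := by
        apply zero_of_integral_dot (g y) T hT (hgc y)
        have := dotW y y
        rw [hWy, dotProduct_zero] at this
        exact this.symm
      set fk : ℕ → ℝ → Fin m → ℝ :=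
        fun k t => ((H * A ^ k) * NormedSpace.exp (t • A)).mulVec y with hfk
      have hfk0 : ∀ t, fk 0 t = g y t := by
        intro t
        show ((H * A ^ 0) * NormedSpace.exp (t • A)).mulVec y = g y t
        rw [pow_zero, Matrix.mul_one, ← Matrix.mulVec_mulVec]
      have hfkz : ∀ k, ∀ t ∈ Ioo (0:ℝ) T, fk k t = 0 := by
        intro k
        induction k with
        | zero => intro t ht; rw [hfk0]; exact hgy t ht
        | succ k ih =>
          intro t ht
          have hd1 : HasDerivAt (fun s : ℝ => fk k s)
              (((H * A ^ k) * A * NormedSpace.exp (t • A)).mulVec y) t := hder A _ y t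
          have hrw : (H * A ^ k) * A = H * A ^ (k + 1) := by
            rw [Matrix.mul_assoc, ← pow_succ]
          rw [hrw] at hd1
          have heq : (fun s : ℝ => fk k s) =ᶠ[nhds t] (fun _ => (0 : Fin m → ℝ)) :=
            Filter.eventuallyEq_of_mem (Ioo_mem_nhds ht.1 ht.2) fun s hs => ih s hs
          have hd2 : HasDerivAt (fun _ : ℝ => (0 : Fin m → ℝ))
              ((H * A ^ (k + 1) * NormedSpace.exp (t • A)).mulVec y) t :=
            hd1.congr_of_eventuallyEq heq.symm
          exact (hd2.unique (hasDerivAt_const t 0))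
      set t₀ : ℝ := T / 2 with ht₀
      have ht₀m : t₀ ∈ Ioo (0:ℝ) T := ⟨by rw [ht₀]; linarith, by rw [ht₀]; linarith⟩
      set ξ : Fin d → ℝ := (NormedSpace.exp (t₀ • A)).mulVec y with hξdef
      have hξ : ∀ k : ℕ, (H * A ^ k).mulVec ξ = 0 := by
        intro k
        have h1 := hfkz k t₀ ht₀m
        show (H * A ^ k).mulVec ((NormedSpace.exp (t₀ • A)).mulVec y) = 0
        rw [Matrix.mulVec_mulVec]
        exact h1
      have hyk : ∀ k : ℕ, (H * A ^ k).mulVec y = 0 := by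
        intro k
        have hy' : y = (NormedSpace.exp ((-t₀) • A)).mulVec ξ :=
          (exp_pullback A t₀ y).symm
        rw [hy']
        funext i
        simp only [Pi.zero_apply]
        rw [dshuf]
        apply dot_exp_eq_zero
        intro n
        rw [← dshuf, Matrix.mulVec_mulVec, Matrix.mul_assoc, ← pow_add, hξ (k + n)]
        simp
      have hygen : ∀ v ∈ gen, y ⬝ᵥ v = 0 := by
        rintro v ⟨k, hk, i, rfl⟩
        rw [Matrix.dotProduct_mulVec]
        have h1 : (Aᵀ ^ k * Hᵀ)ᵀ = H * A ^ k := by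
          rw [Matrix.transpose_mul, Matrix.transpose_pow, Matrix.transpose_transpose,
            Matrix.transpose_transpose]
        have h2 : y ᵥ* (Aᵀ ^ k * Hᵀ) = (Aᵀ ^ k * Hᵀ)ᵀ *ᵥ y := (Matrix.mulVec_transpose _ _).symm
        rw [h2, h1, hyk k, zero_dotProduct]
      intro u hu
      induction hu using Submodule.span_induction with
      | mem v hv => exact hygen v hv
      | zero => simp
      | add a b _ _ ha hb => rw [dotProduct_add, ha, hb, add_zero]
      | smul c a _ ha => rw [dotProduct_smul, ha, smul_zero]
    have hvW : v ∈ Submodule.span ℝ (Set.range W) := by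
      apply dot_orth
      intro y hy
      have hy0 : ∀ x, y ⬝ᵥ W x = 0 := fun x => hy (W x) (Submodule.subset_span ⟨x, rfl⟩)
      exact kernel_orth y hy0 v hv
    clear hv
    induction hvW using Submodule.span_induction with
    | mem w hw =>
      obtain ⟨x, rfl⟩ := hw
      exact hWR x
    | zero =>
      exact ⟨fun _ => 0, continuous_const, by simp [Matrix.mulVec_zero]⟩
    | add a b _ _ ha hb =>
      obtain ⟨u₁, h₁, rfl⟩ := ha
      obtain ⟨u₂, h₂, rfl⟩ := hb
      refine ⟨fun t => u₁ t + u₂ t, h₁.add h₂, ?_⟩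
      simp only [Matrix.mulVec_add]
      rw [intervalIntegral.integral_add ((contF u₁ h₁).intervalIntegrable 0 T)
        ((contF u₂ h₂).intervalIntegrable 0 T)]
    | smul c a _ ha =>
      obtain ⟨u₁, h₁, rfl⟩ := ha
      refine ⟨fun t => c • u₁ t, h₁.const_smul c, ?_⟩
      simp only [Matrix.mulVec_smul]
      rw [intervalIntegral.integral_smul]
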